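/- For all sufficiently large n, there exists a simple graph with n vertices and at most n + (3/2)·log₂ n + 1 edges that contains a cycle of length k for every 3 ≤ k ≤ n. -/

import Mathlib

namespace Stmt4Aux

open SimpleGraph

/-! ### Generic lemmas about building cycles from vertex sequences -/

lemma exists_walk_chain {V : Type*} (G : SimpleGraph V) (g : ℕ → V) :
    ∀ j : ℕ, (∀ i < j, G.Adj (g i) (g (i+1))) →
      ∃ w : G.Walk (g 0) (g j), w.length = j ∧ w.support = (List.range (j+1)).map g := by
  intro j
  induction j with
  | zero => intro _; exact ⟨SimpleGraph.Walk.nil, rfl, by simp [List.range_succ]⟩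
  | succ j ih =>
      intro h
      obtain ⟨w, hl, hs⟩ := ih (fun i hi => h i (by omega))
      refine ⟨w.concat (h j (by omega)), ?_, ?_⟩
      · simp [hl]
      · rw [SimpleGraph.Walk.support_concat, hs]
        simp [List.range_succ]

lemma exists_cycle_of_seq {V : Type*} (G : SimpleGraph V) (f : ℕ → V) (k : ℕ) (hk : 3 ≤ k)
    (hinj : ∀ a < k, ∀ b < k, f a = f b → a = b)
    (hadj : ∀ i, i + 1 < k → G.Adj (f i) (f (i+1)))
    (hcl : G.Adj (f (k-1)) (f 0)) :
    ∃ (v : V) (c : G.Walk v v), c.IsCycle ∧ c.length = k := by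
  obtain ⟨K, rfl⟩ : ∃ K, k = K + 3 := ⟨k - 3, by omega⟩
  obtain ⟨w, hl, hs⟩ := exists_walk_chain G (fun i => f (i+1)) (K+1)
      (fun i hi => hadj (i+1) (by omega))
  -- w : G.Walk (f 1) (f (K+2))
  have hcl' : G.Adj (f (K+2)) (f 0) := hcl
  let p : G.Walk (f 1) (f 0) := w.concat hcl'
  have hps : p.support = ((List.range (K+2)).map (fun i => f (i+1))) ++ [f 0] := by
    show (w.concat hcl').support = _
    rw [SimpleGraph.Walk.support_concat, hs]
  have hpath : p.IsPath := by
    rw [SimpleGraph.Walk.isPath_def, hps]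
    rw [List.nodup_append]
    refine ⟨?_, List.nodup_singleton _, ?_⟩
    · refine List.Nodup.map_on ?_ List.nodup_range
      intro x hx y hy hxy
      rw [List.mem_range] at hx hy
      have := hinj (x+1) (by omega) (y+1) (by omega) hxy
      omega
    · intro a ha b hb hab
      subst hab
      rw [List.mem_map] at ha
      obtain ⟨x, hx, hxa⟩ := ha
      rw [List.mem_range] at hx
      rw [List.mem_singleton] at hb
      have := hinj (x+1) (by omega) 0 (by omega) (by rw [hxa, hb])
      omega
  have hne : s(f 0, f 1) ∉ p.edges := by
    show s(f 0, f 1) ∉ (w.concat hcl').edges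
    rw [SimpleGraph.Walk.edges_concat]
    intro hmem
    rw [List.concat_eq_append, List.mem_append] at hmem
    rcases hmem with hmem | hmem
    · have h0 : f 0 ∈ w.support := w.fst_mem_support_of_mem_edges hmem
      rw [hs, List.mem_map] at h0
      obtain ⟨x, hx, hEq⟩ := h0
      rw [List.mem_range] at hx
      have := hinj (x+1) (by omega) 0 (by omega) hEq
      omega
    · rw [List.mem_singleton, Sym2.eq_iff] at hmem
      rcases hmem with ⟨h1, h2⟩ | ⟨h1, h2⟩
      · have := hinj 1 (by omega) 0 (by omega) h2
        omega
      · have := hinj 1 (by omega) (K+2) (by omega) h2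
        omega
  refine ⟨f 0, SimpleGraph.Walk.cons (hadj 0 (by omega)) p, ?_, ?_⟩
  · exact (SimpleGraph.Walk.cons_isCycle_iff p _).mpr ⟨hpath, hne⟩
  · show ((w.concat hcl').length + 1) = K + 3
    rw [SimpleGraph.Walk.length_concat, hl]

lemma step_mono {f : ℕ → ℕ} {l : ℕ} (h : ∀ a < l, f a < f (a+1)) :
    ∀ a b, a < b → b ≤ l → f a < f b := by
  intro a b hab hbl
  induction b with
  | zero => omega
  | succ b ih =>
      rcases Nat.lt_or_ge a b with h' | h'
      · exact lt_trans (ih h' (by omega)) (h b (by omega))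
      · have : a = b := by omega
        subst this
        exact h a (by omega)

/-! ### The construction -/

/-- `M n` : number of "doubling" chords. -/
def M (n : ℕ) : ℕ := Nat.find (⟨n, Nat.le_add_left n (2^n)⟩ : ∃ m, n ≤ 2^m + m)

lemma M_spec (n : ℕ) : n ≤ 2^(M n) + M n := by unfold M; exact Nat.find_spec (⟨n, Nat.le_add_left n (2^n)⟩ : ∃ m, n ≤ 2^m + m)

lemma M_min (n : ℕ) {m : ℕ} (h : m < M n) : 2^m + m < n := by
  unfold M at h
  have := Nat.find_min _ h
  omega

lemma M_ge (n : ℕ) (hn : 2^26 + 26 < n) : 27 ≤ M n := by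
  by_contra h
  push_neg at h
  have h1 := M_spec n
  have h2 : (2:ℕ)^(M n) ≤ 2^26 := Nat.pow_le_pow_right (by norm_num) (by omega)
  omega

/-- chord positions -/
def c (n i : ℕ) : ℕ := min (2^i + i - 1) (n - 1)

lemma c_le (n i : ℕ) : c n i ≤ n - 1 := min_le_right _ _

lemma c_zero (n : ℕ) : c n 0 = 0 := by simp [c]

lemma c_mono (n : ℕ) : Monotone (c n) := by
  intro a b hab
  have h1 : (2:ℕ)^a ≤ 2^b := Nat.pow_le_pow_right (by norm_num) hab
  exact min_le_min (by omega) le_rfl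

lemma one_le_M (n : ℕ) (hn : 2^26 + 26 < n) : 1 ≤ M n := by have := M_ge n hn; omega

lemma c_small (n : ℕ) (hn : 2^26 + 26 < n) {i : ℕ} (hi : i < M n) :
    2^i + i ≤ n - 1 ∧ c n i = 2^i + i - 1 := by
  have hM := one_le_M n hn
  have h1 : 2^(M n - 1) + (M n - 1) < n := M_min n (by omega)
  have h2 : (2:ℕ)^i ≤ 2^(M n - 1) := Nat.pow_le_pow_right (by norm_num) (by omega)
  have h3 : 2^i + i ≤ n - 1 := by omega
  have h4 : (1:ℕ) ≤ 2^i := Nat.one_le_two_pow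
  exact ⟨h3, min_eq_left (by omega)⟩

lemma c_last (n : ℕ) (hn : 2^26 + 26 < n) : c n (M n) = n - 1 := by
  have h1 := M_spec n
  have h4 : (1:ℕ) ≤ 2^(M n) := Nat.one_le_two_pow
  exact min_eq_right (by omega)

lemma c_strict (n : ℕ) (hn : 2^26 + 26 < n) {i : ℕ} (hi : i < M n) :
    c n i < c n (i+1) := by
  obtain ⟨h3, heq⟩ := c_small n hn hi
  have h4 : (1:ℕ) ≤ 2^i := Nat.one_le_two_pow
  have h5 : (2:ℕ)^(i+1) = 2 * 2^i := by ring
  rw [heq]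
  exact lt_min (by omega) (by omega)

lemma c_strictOn (n : ℕ) (hn : 2^26 + 26 < n) {a b : ℕ} (hab : a < b) (hb : b ≤ M n) :
    c n a < c n b := by
  induction b with
  | zero => omega
  | succ b ih =>
      rcases Nat.lt_or_ge a b with h' | h'
      · exact lt_trans (ih h' (by omega)) (c_strict n hn (by omega))
      · have : a = b := by omega
        subst this
        exact c_strict n hn (by omega)

lemma c_one (n : ℕ) (hn : 2^26 + 26 < n) : c n 1 = 2 := by
  have := (c_small n hn (i := 1) (by have := M_ge n hn; omega)).2
  simpa using this

lemma c_pos (n : ℕ) (hn : 2^26 + 26 < n) {j : ℕ} (hj1 : 1 ≤ j) : 2 ≤ c n j := by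
  have h1 : c n 1 ≤ c n j := c_mono n hj1
  rw [c_one n hn] at h1
  omega

/-- completeness inequality used in the subset-sum induction -/
lemma c_complete (n : ℕ) (hn : 2^26 + 26 < n) {i : ℕ} (hi : i < M n) :
    c n (i+1) + i ≤ 2 * c n i + 2 := by
  obtain ⟨h3, heq⟩ := c_small n hn hi
  have h4 : (1:ℕ) ≤ 2^i := Nat.one_le_two_pow
  have h5 : (2:ℕ)^(i+1) = 2 * 2^i := by ring
  have h6 : c n (i+1) ≤ 2^(i+1) + (i+1) - 1 := min_le_left _ _
  omega

/-- chords from `0`: admissible indices -/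
def Jpred (n j : ℕ) : Prop := (1 ≤ j ∧ j ≤ 3) ∨ (1 ≤ j ∧ j ≤ M n ∧ j % 3 = M n % 3)

/-- the edge relation -/
def rel (n x y : ℕ) : Prop :=
  y = x + 1 ∨ (x = 0 ∧ y = n - 1) ∨
  (∃ i, i < M n ∧ x = c n i ∧ y = c n (i+1)) ∨
  (x = 0 ∧ ∃ j, Jpred n j ∧ y = c n j)

/-- the graph -/
def G (n : ℕ) : SimpleGraph (Fin n) :=
  SimpleGraph.fromRel (fun a b : Fin n => rel n a.val b.val)

lemma G_adj (n : ℕ) {a b : Fin n} (hne : a ≠ b)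
    (h : rel n a.val b.val ∨ rel n b.val a.val) : (G n).Adj a b := by
  rw [G, SimpleGraph.fromRel_adj]
  exact ⟨hne, h⟩

/-! ### The subset-sum induction producing increasing paths -/

lemma path_exists (n : ℕ) (hn : 2^26 + 26 < n) :
    ∀ i, i ≤ M n → ∀ s, s + i ≤ c n i →
    ∃ (l : ℕ) (f : ℕ → ℕ), f 0 = 0 ∧ f l = c n i ∧ l + s = c n i ∧
      (∀ a < l, f a < f (a+1) ∧ rel n (f a) (f (a+1))) := by
  intro i
  induction i with
  | zero =>
      intro _ s hs
      rw [c_zero] at hs ⊢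
      refine ⟨0, fun _ => 0, rfl, rfl, by omega, by omega⟩
  | succ i ih =>
      intro hi s hs
      have hstrict : c n i < c n (i+1) := c_strict n hn (by omega)
      have hcomp : c n (i+1) + i ≤ 2 * c n i + 2 := c_complete n hn (by omega)
      rcases le_or_gt (s + i) (c n i) with hcase | hcase
      · -- use the arc from c n i to c n (i+1)
        obtain ⟨l, f, h0, hend, hlen, hstep⟩ := ih (by omega) s hcase
        set d := c n (i+1) - c n i with hd
        refine ⟨l + d, (fun a => if a ≤ l then f a else c n i + (a - l)),
          by simp [h0], ?_, by omega, ?_⟩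
        · have : ¬ (l + d ≤ l) := by omega
          simp only [this, if_false]
          omega
        · intro a ha
          rcases Nat.lt_or_ge a l with h' | h'
          · have e1 : a ≤ l := by omega
            have e2 : a + 1 ≤ l := by omega
            simp only [e1, if_true, e2, if_true]
            exact hstep a h'
          · have e2 : ¬ (a + 1 ≤ l) := by omega
            rcases Nat.eq_or_lt_of_le h' with h'' | h''
            · subst h''
              simp only [le_refl, if_true, e2, if_false, hend]
              constructor
              · omega
              · left; omega
            · have e1 : ¬ (a ≤ l) := by omega
              simp only [e1, if_false, e2, if_false]
              constructor
              · omega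
              · left; omega
      · -- use the chord from c n i to c n (i+1)
        set v := c n (i+1) - c n i - 1 with hv
        have hvs : v ≤ s := by omega
        obtain ⟨l, f, h0, hend, hlen, hstep⟩ := ih (by omega) (s - v) (by omega)
        refine ⟨l + 1, (fun a => if a ≤ l then f a else c n (i+1)),
          by simp [h0], ?_, by omega, ?_⟩
        · have : ¬ (l + 1 ≤ l) := by omega
          simp [this]
        · intro a ha
          rcases Nat.lt_or_ge a l with h' | h'
          · have e1 : a ≤ l := by omega
            have e2 : a + 1 ≤ l := by omega
            simp only [e1, if_true, e2, if_true]
            exact hstep a h'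
          · have haa : a = l := by omega
            subst haa
            have e2 : ¬ (a + 1 ≤ a) := by omega
            simp only [le_refl, if_true, e2, if_false, hend]
            refine ⟨hstrict, ?_⟩
            right; right; left
            exact ⟨i, by omega, rfl, rfl⟩

/-! ### Large cycles : every length in [M n + 1, n] -/

lemma big_cycle (n : ℕ) (hn : 2^26 + 26 < n) (k : ℕ)
    (hk1 : M n + 1 ≤ k) (hk2 : k ≤ n) :
    ∃ (v : Fin n) (c : (G n).Walk v v), c.IsCycle ∧ c.length = k := by
  have hM27 := M_ge n hn
  have hclast := c_last n hn
  obtain ⟨l, f, h0, hend, hlen, hstep⟩ :=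
    path_exists n hn (M n) le_rfl (n - k) (by omega)
  rw [hclast] at hend hlen
  have hnpos : 0 < n := by omega
  have hmono : ∀ a b, a < b → b ≤ l → f a < f b := step_mono (fun a ha => (hstep a ha).1)
  have hbound : ∀ a, f (min a l) < n := by
    intro a
    rcases Nat.lt_or_ge (min a l) l with h' | h'
    · have := hmono (min a l) l h' le_rfl
      omega
    · have : min a l = l := by omega
      rw [this, hend]; omega
  have hl : l = k - 1 := by omega
  set F : ℕ → Fin n := fun a => ⟨f (min a l), hbound a⟩ with hF
  apply exists_cycle_of_seq (G n) F k (by omega)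
  · intro a ha b hb hab
    have ha' : min a l = a := by omega
    have hb' : min b l = b := by omega
    have hthis : f (min a l) = f (min b l) := congrArg Fin.val hab
    rw [ha', hb'] at hthis
    rcases Nat.lt_trichotomy a b with h' | h' | h'
    · have := hmono a b h' (by omega); omega
    · exact h'
    · have := hmono b a h' (by omega); omega
  · intro a ha
    have ha1 : min a l = a := by omega
    have ha2 : min (a+1) l = a + 1 := by omega
    have hst := hstep a (by omega)
    apply G_adj
    · intro hEq
      have hthis : f (min a l) = f (min (a+1) l) := congrArg Fin.val hEq
      rw [ha1, ha2] at hthis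
      omega
    · left
      show rel n (f (min a l)) (f (min (a+1) l))
      rw [ha1, ha2]
      exact hst.2
  · have e1 : min (k-1) l = l := by omega
    have e2 : min 0 l = 0 := by omega
    apply G_adj
    · intro hEq
      have hthis : f (min (k-1) l) = f (min 0 l) := congrArg Fin.val hEq
      rw [e1, e2, hend, h0] at hthis
      omega
    · right
      show rel n (f (min 0 l)) (f (min (k-1) l))
      rw [e1, e2, hend, h0]
      right; left
      exact ⟨rfl, rfl⟩

/-! ### Small cycles : every length in [3, M n] -/

lemma small_cycle (n : ℕ) (hn : 2^26 + 26 < n) (k : ℕ)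
    (hk1 : 3 ≤ k) (hk2 : k ≤ M n) :
    ∃ (v : Fin n) (c : (G n).Walk v v), c.IsCycle ∧ c.length = k := by
  have hM27 := M_ge n hn
  set δ := k - 2 with hδ
  have hδ1 : 1 ≤ δ := by omega
  have hδ2 : δ ≤ M n - 2 := by omega
  obtain ⟨i, hi1, hi3, hij⟩ : ∃ i, 1 ≤ i ∧ i ≤ 3 ∧ (i + δ) % 3 = M n % 3 :=
    ⟨(M n + 2 - δ) % 3 + 1, by omega, by omega, by omega⟩
  set j := i + δ with hj
  have hjM : j ≤ M n := by omega
  have hnpos : 0 < n := by omega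
  have hcb : ∀ t : ℕ, c n t < n := by
    intro t; have := c_le n t; omega
  set F : ℕ → Fin n := fun a => if a = 0 then ⟨0, hnpos⟩ else ⟨c n (i + a - 1), hcb _⟩ with hF
  apply exists_cycle_of_seq (G n) F k hk1
  · -- injectivity
    intro a ha b hb hab
    rcases Nat.eq_zero_or_pos a with ha0 | ha0 <;> rcases Nat.eq_zero_or_pos b with hb0 | hb0
    · omega
    · exfalso
      subst ha0
      have hb1 : ¬ (b = 0) := by omega
      simp only [hF, if_pos rfl, if_neg hb1] at hab
      have : (0:ℕ) = c n (i + b - 1) := congrArg Fin.val hab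
      have := c_pos n hn (j := i + b - 1) (by omega)
      omega
    · exfalso
      subst hb0
      have ha1 : ¬ (a = 0) := by omega
      simp only [hF, if_pos rfl, if_neg ha1] at hab
      have : c n (i + a - 1) = (0:ℕ) := congrArg Fin.val hab
      have := c_pos n hn (j := i + a - 1) (by omega)
      omega
    · have ha1 : ¬ (a = 0) := by omega
      have hb1 : ¬ (b = 0) := by omega
      simp only [hF, if_neg ha1, if_neg hb1] at hab
      have hv : c n (i + a - 1) = c n (i + b - 1) := congrArg Fin.val hab
      rcases Nat.lt_trichotomy a b with h' | h' | h'
      · exfalso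
        have := c_strictOn n hn (a := i + a - 1) (b := i + b - 1) (by omega) (by omega)
        omega
      · exact h'
      · exfalso
        have := c_strictOn n hn (a := i + b - 1) (b := i + a - 1) (by omega) (by omega)
        omega
  · -- adjacency of consecutive
    intro a ha
    rcases Nat.eq_zero_or_pos a with ha0 | ha0
    · subst ha0
      have h1 : ¬ ((1:ℕ) = 0) := by omega
      simp only [hF, if_pos rfl, if_neg h1]
      apply G_adj
      · intro hEq
        have : (0:ℕ) = c n (i + 1 - 1) := congrArg Fin.val hEq
        have := c_pos n hn (j := i + 1 - 1) (by omega)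
        omega
      · left
        show rel n 0 (c n (i + 1 - 1))
        right; right; right
        refine ⟨rfl, i, Or.inl ⟨hi1, hi3⟩, by rw [Nat.add_sub_cancel]⟩
    · have ha1 : ¬ (a = 0) := by omega
      have ha2 : ¬ (a + 1 = 0) := by omega
      simp only [hF, if_neg ha1, if_neg ha2]
      have hlt : i + a - 1 < M n := by omega
      apply G_adj
      · intro hEq
        have hv : c n (i + a - 1) = c n (i + (a+1) - 1) := congrArg Fin.val hEq
        have := c_strictOn n hn (a := i + a - 1) (b := i + (a+1) - 1) (by omega) (by omega)
        omega
      · left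
        show rel n (c n (i + a - 1)) (c n (i + (a+1) - 1))
        right; right; left
        refine ⟨i + a - 1, hlt, rfl, by congr 1; omega⟩
  · -- closing edge
    have hk1' : ¬ (k - 1 = 0) := by omega
    simp only [hF, if_neg hk1', if_pos rfl]
    have hidx : i + (k-1) - 1 = j := by omega
    rw [hidx]
    apply G_adj
    · intro hEq
      have : c n j = (0:ℕ) := congrArg Fin.val hEq
      have := c_pos n hn (j := j) (by omega)
      omega
    · right
      show rel n 0 (c n j)
      right; right; right
      exact ⟨rfl, j, Or.inr ⟨by omega, hjM, hij⟩, rfl⟩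

/-! ### Edge counting -/

lemma edge_count (n : ℕ) (hn : 2^26 + 26 < n) :
    (G n).edgeSet.ncard ≤ n + M n + (M n / 3 + 4) := by
  have hM27 := M_ge n hn
  have hnpos : 0 < n := by omega
  have hcb : ∀ t : ℕ, c n t < n := by intro t; have := c_le n t; omega
  set cF : ℕ → Fin n := fun t => ⟨c n t, hcb t⟩ with hcF
  set succF : Fin n → Fin n := fun x => ⟨(x.val + 1) % n, Nat.mod_lt _ hnpos⟩ with hsuccF
  set T₁ : Finset (Sym2 (Fin n)) := Finset.univ.image (fun x : Fin n => s(x, succF x)) with hT₁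
  set T₂ : Finset (Sym2 (Fin n)) :=
    (Finset.range (M n)).image (fun t => s(cF t, cF (t+1))) with hT₂
  set Jf : Finset ℕ := ({1, 2, 3} : Finset ℕ) ∪
    (Finset.range (M n + 1)).filter (fun j => j % 3 = M n % 3) with hJf
  set T₃ : Finset (Sym2 (Fin n)) := Jf.image (fun t => s(⟨0, hnpos⟩, cF t)) with hT₃
  have hsub : (G n).edgeSet ⊆ ↑(T₁ ∪ T₂ ∪ T₃) := by
    have key : ∀ a b : Fin n, rel n a.val b.val → s(a, b) ∈ T₁ ∪ T₂ ∪ T₃ := by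
      intro a b hrel
      rcases hrel with h | ⟨h1, h2⟩ | ⟨t, ht, h1, h2⟩ | ⟨h1, t, ht, h2⟩
      · -- step edge
        apply Finset.mem_union_left; apply Finset.mem_union_left
        rw [hT₁, Finset.mem_image]
        refine ⟨a, Finset.mem_univ _, ?_⟩
        have hb2 : succF a = b := by
          apply Fin.ext
          show (a.val + 1) % n = b.val
          have : b.val < n := b.isLt
          rw [Nat.mod_eq_of_lt (by omega)]
          omega
        rw [hb2]
      · -- wrap edge
        apply Finset.mem_union_left; apply Finset.mem_union_left
        rw [hT₁, Finset.mem_image]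
        refine ⟨b, Finset.mem_univ _, ?_⟩
        have ha2 : succF b = a := by
          apply Fin.ext
          show (b.val + 1) % n = a.val
          have hb : b.val = n - 1 := h2
          have hn1 : 0 < n := hnpos
          rw [hb, h1, Nat.sub_add_cancel (by omega), Nat.mod_self]
        rw [ha2]
        exact Sym2.eq_swap
      · -- path chord
        apply Finset.mem_union_left; apply Finset.mem_union_right
        rw [hT₂, Finset.mem_image]
        refine ⟨t, Finset.mem_range.mpr ht, ?_⟩
        have e1 : cF t = a := Fin.ext h1.symm
        have e2 : cF (t+1) = b := Fin.ext h2.symm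
        rw [e1, e2]
      · -- star chord
        apply Finset.mem_union_right
        rw [hT₃, Finset.mem_image]
        refine ⟨t, ?_, ?_⟩
        swap
        · have e1 : (⟨0, hnpos⟩ : Fin n) = a := Fin.ext h1.symm
          have e2 : cF t = b := Fin.ext h2.symm
          rw [e1, e2]
        rw [hJf, Finset.mem_union]
        rcases ht with ⟨hj1, hj3⟩ | ⟨hj1, hjM, hjmod⟩
        · left; simp; omega
        · right
          rw [Finset.mem_filter, Finset.mem_range]
          exact ⟨by omega, hjmod⟩
    intro e he
    induction e with
    | h a b =>
        rw [SimpleGraph.mem_edgeSet, G, SimpleGraph.fromRel_adj] at he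
        obtain ⟨hne, h | h⟩ := he
        · exact key a b h
        · rw [Sym2.eq_swap]; exact key b a h
  have hcard : ((T₁ ∪ T₂ ∪ T₃ : Finset (Sym2 (Fin n)))).card ≤ n + M n + (M n / 3 + 4) := by
    have h1 : T₁.card ≤ n := by
      calc T₁.card ≤ (Finset.univ : Finset (Fin n)).card := Finset.card_image_le
        _ = n := by simp
    have h2 : T₂.card ≤ M n := by
      calc T₂.card ≤ (Finset.range (M n)).card := Finset.card_image_le
        _ = M n := Finset.card_range _
    have hJcard : Jf.card ≤ M n / 3 + 4 := by
      have hsubJ : (Finset.range (M n + 1)).filter (fun j => j % 3 = M n % 3) ⊆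
          (Finset.range (M n / 3 + 1)).image (fun a => M n - 3 * a) := by
        intro j hj
        rw [Finset.mem_filter, Finset.mem_range] at hj
        rw [Finset.mem_image]
        exact ⟨(M n - j) / 3, Finset.mem_range.mpr (by omega), by omega⟩
      calc Jf.card ≤ ({1,2,3} : Finset ℕ).card +
            ((Finset.range (M n + 1)).filter (fun j => j % 3 = M n % 3)).card :=
            Finset.card_union_le _ _
        _ ≤ 3 + ((Finset.range (M n / 3 + 1)).image (fun a => M n - 3 * a)).card := by
            have := Finset.card_le_card hsubJ
            have h3 : ({1,2,3} : Finset ℕ).card ≤ 3 := by decide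
            omega
        _ ≤ 3 + (M n / 3 + 1) := by
            have := Finset.card_image_le (s := Finset.range (M n / 3 + 1))
              (f := fun a => M n - 3 * a)
            rw [Finset.card_range] at this
            omega
        _ = M n / 3 + 4 := by omega
    have h3 : T₃.card ≤ M n / 3 + 4 := le_trans Finset.card_image_le hJcard
    calc (T₁ ∪ T₂ ∪ T₃).card ≤ (T₁ ∪ T₂).card + T₃.card := Finset.card_union_le _ _
      _ ≤ T₁.card + T₂.card + T₃.card := by
          have := Finset.card_union_le T₁ T₂
          omega
      _ ≤ n + M n + (M n / 3 + 4) := by omega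
  calc (G n).edgeSet.ncard ≤ (↑(T₁ ∪ T₂ ∪ T₃) : Set (Sym2 (Fin n))).ncard :=
        Set.ncard_le_ncard hsub (Finset.finite_toSet _)
    _ = (T₁ ∪ T₂ ∪ T₃).card := Set.ncard_coe_finset _
    _ ≤ n + M n + (M n / 3 + 4) := hcard

end Stmt4Aux

/-- For all sufficiently large n, there exists a simple graph with
n vertices and at most n + (3/2)·log₂ n + 1 edges that contains a cycle of
length k for every 3 ≤ k ≤ n. -/
theorem stmt_4 :
    ∃ N : ℕ, ∀ n : ℕ, N ≤ n →
      ∃ G : SimpleGraph (Fin n),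
        (∀ k : ℕ, 3 ≤ k → k ≤ n →
          ∃ (v : Fin n) (c : G.Walk v v), c.IsCycle ∧ c.length = k) ∧
        (G.edgeSet.ncard : ℝ) ≤ n + 3 / 2 * Real.logb 2 n + 1 := by
  refine ⟨2^26 + 27, fun n hn => ?_⟩
  have hn' : 2^26 + 26 < n := by omega
  refine ⟨Stmt4Aux.G n, ?_, ?_⟩
  · intro k hk3 hkn
    rcases le_or_gt k (Stmt4Aux.M n) with h | h
    · exact Stmt4Aux.small_cycle n hn' k hk3 h
    · exact Stmt4Aux.big_cycle n hn' k (by omega) hkn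
  · have hM27 := Stmt4Aux.M_ge n hn'
    have hcount := Stmt4Aux.edge_count n hn'
    have hMlog : ((Stmt4Aux.M n : ℝ) - 1) ≤ Real.logb 2 n := by
      have hpow : ((2:ℝ))^(Stmt4Aux.M n - 1) ≤ (n : ℝ) := by
        have h1 : 2^(Stmt4Aux.M n - 1) + (Stmt4Aux.M n - 1) < n :=
          Stmt4Aux.M_min n (by omega)
        exact_mod_cast Nat.le_of_lt (show 2^(Stmt4Aux.M n - 1) < n by omega)
      have := Real.logb_le_logb_of_le (b := 2) (by norm_num)
        (x := (2:ℝ)^(Stmt4Aux.M n - 1)) (by positivity) hpow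
      rw [Real.logb_pow, Real.logb_self_eq_one (by norm_num)] at this
      calc ((Stmt4Aux.M n : ℝ) - 1) ≤ ((Stmt4Aux.M n - 1 : ℕ) : ℝ) := by
            push_cast [Nat.cast_sub (by omega : 1 ≤ Stmt4Aux.M n)]
            norm_num
        _ ≤ Real.logb 2 n := by
            calc ((Stmt4Aux.M n - 1 : ℕ) : ℝ) = (Stmt4Aux.M n - 1 : ℕ) * 1 := by ring
              _ ≤ Real.logb 2 n := this
    have hdiv : ((Stmt4Aux.M n / 3 : ℕ) : ℝ) ≤ (Stmt4Aux.M n : ℝ) / 3 := by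
      have h := Nat.div_mul_le_self (Stmt4Aux.M n) 3
      have h2 : ((Stmt4Aux.M n / 3 : ℕ) : ℝ) * 3 ≤ (Stmt4Aux.M n : ℝ) := by
        exact_mod_cast Nat.div_mul_le_self (Stmt4Aux.M n) 3
      linarith
    have hcount' : ((Stmt4Aux.G n).edgeSet.ncard : ℝ) ≤
        (n : ℝ) + (Stmt4Aux.M n : ℝ) + (((Stmt4Aux.M n / 3 : ℕ) : ℝ) + 4) := by
      exact_mod_cast hcount
    have hM27' : (27 : ℝ) ≤ (Stmt4Aux.M n : ℝ) := by exact_mod_cast hM27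
    linarith
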